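/- Let G be a finite group and ρ a representation of G on a finite-dimensional complex vector space W, with character χ(g) = tr(ρ(g)). Then for h, k ∈ G one has χ(γh) = χ(γk) for every γ ∈ G if and only if ρ(h) = ρ(k). -/

import Mathlib

/-- For a representation `ρ` of a finite group `G` on a finite-dimensional complex
vector space `W` with character `χ g = tr (ρ g)`, and `h, k ∈ G`:
`χ (γ h) = χ (γ k)` for all `γ ∈ G` iff `ρ h = ρ k`. -/
theorem character_translates_eq_iff
    {G : Type*} [Group G] [Fintype G]
    {W : Type*} [AddCommGroup W] [Module ℂ W] [FiniteDimensional ℂ W]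
    (ρ : Representation ℂ G W) (h k : G) :
    (∀ γ : G, LinearMap.trace ℂ W (ρ (γ * h)) = LinearMap.trace ℂ W (ρ (γ * k)))
      ↔ ρ h = ρ k := by
  constructor
  · intro H
    set g := h⁻¹ * k with hg
    set u : Module.End ℂ W := ρ g with hu
    have key : ∀ x : G, LinearMap.trace ℂ W (ρ (x * g)) = LinearMap.trace ℂ W (ρ x) := by
      intro x
      have := H (x * h⁻¹)
      rw [mul_assoc, mul_assoc, inv_mul_cancel, mul_one] at this
      exact this.symm
    set d : ℕ := Module.finrank ℂ W with hd
    have tr_pow : ∀ n : ℕ, LinearMap.trace ℂ W (u ^ n) = (d : ℂ) := by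
      intro n
      induction n with
      | zero => simp [LinearMap.trace_one, hd]
      | succ n ih =>
        have hk := key (g ^ n)
        rw [show ρ (g ^ n * g) = ρ (g ^ n) * ρ g from map_mul ρ _ _,
          show ρ (g ^ n) = u ^ n from map_pow ρ g n, ← hu] at hk
        rw [pow_succ, hk, ih]
    set m : ℕ := Fintype.card G with hm
    have hm0 : (m : ℂ) ≠ 0 := by
      exact_mod_cast Fintype.card_ne_zero
    have hum : u ^ m = 1 := by
      rw [hu, ← map_pow, pow_card_eq_one, map_one]
    set S : Module.End ℂ W := ∑ n ∈ Finset.range m, u ^ n with hS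
    have huS : u * S = S := by
      have h1 := Finset.sum_range_succ (fun n => u ^ n) m
      have h2 := Finset.sum_range_succ' (fun n => u ^ n) m
      rw [hS, Finset.mul_sum]
      have e1 : ∑ n ∈ Finset.range m, u * u ^ n = ∑ n ∈ Finset.range m, u ^ (n + 1) := by
        simp [pow_succ']
      rw [e1]
      have e2 : (∑ n ∈ Finset.range m, u ^ (n + 1)) + u ^ 0
          = (∑ n ∈ Finset.range m, u ^ n) + u ^ m := by
        rw [← h2, h1]
      rw [pow_zero, hum] at e2
      exact add_right_cancel e2
    have hpowS : ∀ n : ℕ, u ^ n * S = S := by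
      intro n
      induction n with
      | zero => rw [pow_zero, one_mul]
      | succ n ih => rw [pow_succ', mul_assoc, ih, huS]
    set P : Module.End ℂ W := (m : ℂ)⁻¹ • S with hP
    have hSS : S * S = (m : ℂ) • S := by
      rw [hS, Finset.sum_mul]
      have : ∀ n ∈ Finset.range m, u ^ n * S = S := fun n _ => hpowS n
      rw [Finset.sum_congr rfl this, Finset.sum_const, Finset.card_range,
        Nat.cast_smul_eq_nsmul]
    have hPP : P * P = P := by
      rw [hP, smul_mul_assoc, mul_smul_comm, hSS, smul_smul, smul_smul,
        mul_assoc, inv_mul_cancel₀ hm0, mul_one]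
    have htrP : LinearMap.trace ℂ W P = (d : ℂ) := by
      rw [hP, map_smul, hS, map_sum]
      rw [Finset.sum_congr rfl (fun n _ => tr_pow n), Finset.sum_const, Finset.card_range]
      rw [nsmul_eq_mul, smul_eq_mul, ← mul_assoc, inv_mul_cancel₀ hm0, one_mul]
    -- P is a projection onto its range
    have hproj : LinearMap.IsProj (LinearMap.range P) P := by
      constructor
      · intro x; exact ⟨x, rfl⟩
      · rintro x ⟨y, rfl⟩
        have h2 := congrArg (fun f : Module.End ℂ W => f y) hPP
        simpa [Module.End.mul_apply] using h2
    have htr' : LinearMap.trace ℂ W P = (Module.finrank ℂ (LinearMap.range P) : ℂ) :=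
      hproj.trace
    have hrank : Module.finrank ℂ (LinearMap.range P) = d := by
      have : ((Module.finrank ℂ (LinearMap.range P) : ℂ)) = (d : ℂ) := by
        rw [← htr', htrP]
      exact_mod_cast this
    have htop : LinearMap.range P = ⊤ :=
      Submodule.eq_top_of_finrank_eq hrank
    have hP1 : P = 1 := by
      ext x
      have hx : x ∈ LinearMap.range P := htop ▸ Submodule.mem_top
      obtain ⟨y, hy⟩ := hx
      have h2 := congrArg (fun f : Module.End ℂ W => f y) hPP
      simp only [Module.End.mul_apply] at h2
      rw [hy] at h2
      simpa using h2
    have hu1 : u = 1 := by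
      have : u * P = P := by
        rw [hP, mul_smul_comm, huS]
      rw [hP1, mul_one] at this
      exact this
    have : ρ k = ρ h := by
      have e : ρ h * u = ρ k := by
        rw [hu, ← map_mul, hg, mul_inv_cancel_left]
      rw [hu1, mul_one] at e
      exact e.symm
    exact this.symm
  · intro hρ γ
    rw [show ρ (γ * h) = ρ γ * ρ h from map_mul ρ _ _,
      show ρ (γ * k) = ρ γ * ρ k from map_mul ρ _ _, hρ]
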